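/- Let A be a symmetric invertible p_γ × p_γ real matrix, B a p_γ × p_θ real matrix, and C a symmetric p_θ × p_θ real matrix; let Ĩ = fromBlocks A B Bᵀ C, and fix θ ∈ ℝ^{p_θ}. On a probability space, let β̂ = (γ̂, θ̂) be a random vector in ℝ^{p} (p = p_γ + p_θ) with square-integrable components, mean β̃ = (γ̃, θ̃) and covariance matrix K̃ whose θ-block is K̃_{θθ}; let ε be a random vector in ℝ^{p_γ}, independent of β̂, with square-integrable components, mean zero, and covariance matrix A⁻¹; and set γ = γ̂ + A⁻¹ B (θ̂ − θ) + ε, β = (γ, θ). Then E[ (1/2) (β − β̂)ᵀ Ĩ (β − β̂) ] = (1/2) (θ − θ̃)ᵀ T̃⁻¹ (θ − θ̃) + (1/2) tr(T̃⁻¹ K̃_{θθ}) + p_γ/2, where T̃⁻¹ = C − Bᵀ A⁻¹ B. -/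

import Mathlib

open MeasureTheory ProbabilityTheory Matrix


theorem mulVec_dot' {m n : Type} [Fintype m] [Fintype n] (M : Matrix m n ℝ) (x : m → ℝ) (y : n → ℝ) :
      M.mulVec y ⬝ᵥ x = y ⬝ᵥ Mᵀ.mulVec x := by
  rw [mulVec_transpose, dotProduct_comm y, dotProduct_comm (M *ᵥ y) x, dotProduct_mulVec]

theorem quad_id' {pγ pθ : ℕ} (A D : Matrix (Fin pγ) (Fin pγ) ℝ)
    (hAD : A * D = 1) (hDA : D * A = 1) (hD : Dᵀ = D)
    (B : Matrix (Fin pγ) (Fin pθ) ℝ) (C : Matrix (Fin pθ) (Fin pθ) ℝ)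
    (u : Fin pθ → ℝ) (e : Fin pγ → ℝ) :
    (Sum.elim ((D*B).mulVec u + e) (-u)) ⬝ᵥ
      (fromBlocks A B Bᵀ C).mulVec (Sum.elim ((D*B).mulVec u + e) (-u))
    = u ⬝ᵥ (C - Bᵀ*D*B).mulVec u + e ⬝ᵥ A.mulVec e := by
  have hADv : ∀ x : Fin pγ → ℝ, A *ᵥ (D *ᵥ x) = x := by
    intro x; rw [mulVec_mulVec, hAD, one_mulVec]
  have hDAv : ∀ x : Fin pγ → ℝ, D *ᵥ (A *ᵥ x) = x := by
    intro x; rw [mulVec_mulVec, hDA, one_mulVec]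
  rw [fromBlocks_mulVec, sumElim_dotProduct_sumElim]
  simp only [Sum.elim_comp_inl, Sum.elim_comp_inr, mulVec_add, mulVec_neg, dotProduct_add,
    add_dotProduct, dotProduct_neg, neg_dotProduct, dotProduct_sub, sub_mulVec,
    mulVec_mulVec, mulVec_dot', transpose_mul, hD, transpose_transpose]
  simp only [← mulVec_mulVec, hADv, hDAv]
  ring

theorem memL2_mul_integrable' {Ω : Type*} [MeasurableSpace Ω] {P : Measure Ω}
    {f g : Ω → ℝ} (hf : MemLp f 2 P) (hg : MemLp g 2 P) :
    Integrable (fun ω => f ω * g ω) P := by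
  have h := ((hf.add hg).integrable_sq.sub hf.integrable_sq).sub hg.integrable_sq
  have heq : (fun ω => f ω * g ω)
      = fun ω => (((f + g) ω)^2 - f ω^2 - g ω^2) / 2 := by
    funext ω; simp [Pi.add_apply]; ring
  rw [heq]
  exact h.div_const 2

theorem quad_sum' {n : ℕ} (M : Matrix (Fin n) (Fin n) ℝ) (v : Fin n → ℝ) :
    v ⬝ᵥ M.mulVec v = ∑ i, ∑ j, M i j * (v i * v j) := by
  simp only [dotProduct, mulVec, Finset.mul_sum]
  exact Finset.sum_congr rfl fun i _ => Finset.sum_congr rfl fun j _ => by ring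

theorem integrable_quadForm' {Ω : Type*} [MeasurableSpace Ω] {P : Measure Ω}
    {n : ℕ} (M : Matrix (Fin n) (Fin n) ℝ) (v : Ω → Fin n → ℝ)
    (hv : ∀ i, MemLp (fun ω => v ω i) 2 P) :
    Integrable (fun ω => v ω ⬝ᵥ M.mulVec (v ω)) P := by
  simp only [quad_sum']
  exact integrable_finset_sum _ fun i _ => integrable_finset_sum _ fun j _ =>
    ((memL2_mul_integrable' (hv i) (hv j)).const_mul _)

theorem integral_quadForm' {Ω : Type*} [MeasurableSpace Ω] {P : Measure Ω}
    {n : ℕ} (M : Matrix (Fin n) (Fin n) ℝ) (v : Ω → Fin n → ℝ)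
    (hv : ∀ i, MemLp (fun ω => v ω i) 2 P) :
    ∫ ω, v ω ⬝ᵥ M.mulVec (v ω) ∂P = ∑ i, ∑ j, M i j * ∫ ω, v ω i * v ω j ∂P := by
  simp only [quad_sum']
  refine (integral_finset_sum _ fun i _ => integrable_finset_sum _ fun j _ =>
    ((memL2_mul_integrable' (hv i) (hv j)).const_mul _)).trans ?_
  refine Finset.sum_congr rfl fun i _ => ?_
  refine (integral_finset_sum _ fun j _ => ((memL2_mul_integrable' (hv i) (hv j)).const_mul _)).trans ?_
  exact Finset.sum_congr rfl fun j _ => integral_const_mul _ _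

/-- The generator self-information entry of Table 2 (non-constant part):
E[(1/2)(β − β̂)ᵀ Ĩ (β − β̂)]
  = (1/2)(θ − θ̃)ᵀ T̃⁻¹ (θ − θ̃) + (1/2) tr(T̃⁻¹ K̃_{θθ}) + p_γ/2,
where Ĩ = fromBlocks A B Bᵀ C, T̃⁻¹ = C − Bᵀ A⁻¹ B is the Schur complement,
β̂ = (γ̂, θ̂) has mean β̃ = (γ̃, θ̃) and covariance K̃, and
γ = γ̂ + A⁻¹ B (θ̂ − θ) + ε with ε independent of β̂, mean 0, covariance A⁻¹. -/
theorem expected_generator_self_information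
    {Ω : Type*} [MeasurableSpace Ω] (P : Measure Ω) [IsProbabilityMeasure P]
    {pγ pθ : ℕ}
    (A : Matrix (Fin pγ) (Fin pγ) ℝ) (hA : A.IsSymm) (hAdet : IsUnit A.det)
    (B : Matrix (Fin pγ) (Fin pθ) ℝ)
    (C : Matrix (Fin pθ) (Fin pθ) ℝ) (hC : C.IsSymm)
    (θ : Fin pθ → ℝ)
    (βhat : Ω → (Fin pγ ⊕ Fin pθ → ℝ)) (hβhatMeas : Measurable βhat)
    (hβhatL2 : ∀ i, MemLp (fun ω => βhat ω i) 2 P)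
    (γtilde : Fin pγ → ℝ) (θtilde : Fin pθ → ℝ)
    (hβhatMean : ∀ i, ∫ ω, βhat ω i ∂P = Sum.elim γtilde θtilde i)
    (Ktilde : Matrix (Fin pγ ⊕ Fin pθ) (Fin pγ ⊕ Fin pθ) ℝ)
    (hβhatCov : ∀ i j, ∫ ω, (βhat ω i - Sum.elim γtilde θtilde i)
        * (βhat ω j - Sum.elim γtilde θtilde j) ∂P = Ktilde i j)
    (ε : Ω → (Fin pγ → ℝ)) (hεMeas : Measurable ε)
    (hεL2 : ∀ i, MemLp (fun ω => ε ω i) 2 P)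
    (hεMean : ∀ i, ∫ ω, ε ω i ∂P = 0)
    (hεCov : ∀ i j, ∫ ω, ε ω i * ε ω j ∂P = A⁻¹ i j)
    (hIndep : IndepFun βhat ε P)
    (γ : Ω → (Fin pγ → ℝ))
    (hγ : ∀ ω, γ ω = (fun i => βhat ω (Sum.inl i))
        + A⁻¹.mulVec (B.mulVec ((fun j => βhat ω (Sum.inr j)) - θ)) + ε ω) :
    ∫ ω, (1/2 : ℝ) * ((Sum.elim (γ ω) θ - βhat ω) ⬝ᵥ
        (Matrix.fromBlocks A B Bᵀ C).mulVec (Sum.elim (γ ω) θ - βhat ω)) ∂P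
      = (1/2 : ℝ) * ((θ - θtilde) ⬝ᵥ (C - Bᵀ * A⁻¹ * B).mulVec (θ - θtilde))
        + (1/2 : ℝ) * ((C - Bᵀ * A⁻¹ * B) * Ktilde.toBlocks₂₂).trace
        + (pγ : ℝ) / 2 := by
  have hAD : A * A⁻¹ = 1 := Matrix.mul_nonsing_inv A hAdet
  have hDA : A⁻¹ * A = 1 := Matrix.nonsing_inv_mul A hAdet
  have hDsymm : (A⁻¹)ᵀ = A⁻¹ := by
    rw [Matrix.transpose_nonsing_inv, hA.eq]
  set S : Matrix (Fin pθ) (Fin pθ) ℝ := C - Bᵀ * A⁻¹ * B with hS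
  set u : Ω → Fin pθ → ℝ := fun ω => (fun j => βhat ω (Sum.inr j)) - θ with hu
  -- pointwise identity
  have hδ : ∀ ω, Sum.elim (γ ω) θ - βhat ω
      = Sum.elim ((A⁻¹ * B).mulVec (u ω) + ε ω) (-(u ω)) := by
    intro ω
    funext i
    cases i with
    | inl i =>
        simp only [Pi.sub_apply, Sum.elim_inl, hγ ω, Pi.add_apply, ← mulVec_mulVec]
        ring
    | inr j =>
        simp only [Pi.sub_apply, Sum.elim_inr, Pi.neg_apply, hu]
        ring
  have hpoint : ∀ ω, (1/2 : ℝ) * ((Sum.elim (γ ω) θ - βhat ω) ⬝ᵥ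
        (Matrix.fromBlocks A B Bᵀ C).mulVec (Sum.elim (γ ω) θ - βhat ω))
      = (1/2 : ℝ) * (u ω ⬝ᵥ S.mulVec (u ω)) + (1/2 : ℝ) * (ε ω ⬝ᵥ A.mulVec (ε ω)) := by
    intro ω
    rw [hδ ω, quad_id' A A⁻¹ hAD hDA hDsymm B C (u ω) (ε ω)]
    ring
  have huL2 : ∀ i, MemLp (fun ω => u ω i) 2 P := fun i =>
    (hβhatL2 (Sum.inr i)).sub (memLp_const (θ i))
  -- split the integral
  have hint1 : Integrable (fun ω => u ω ⬝ᵥ S.mulVec (u ω)) P :=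
    integrable_quadForm' S u huL2
  have hint2 : Integrable (fun ω => ε ω ⬝ᵥ A.mulVec (ε ω)) P :=
    integrable_quadForm' A ε hεL2
  calc ∫ ω, (1/2 : ℝ) * ((Sum.elim (γ ω) θ - βhat ω) ⬝ᵥ
        (Matrix.fromBlocks A B Bᵀ C).mulVec (Sum.elim (γ ω) θ - βhat ω)) ∂P
      = ∫ ω, ((1/2 : ℝ) * (u ω ⬝ᵥ S.mulVec (u ω))
          + (1/2 : ℝ) * (ε ω ⬝ᵥ A.mulVec (ε ω))) ∂P := by
        exact integral_congr_ae (Filter.Eventually.of_forall hpoint)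
    _ = (1/2 : ℝ) * (∫ ω, u ω ⬝ᵥ S.mulVec (u ω) ∂P)
          + (1/2 : ℝ) * (∫ ω, ε ω ⬝ᵥ A.mulVec (ε ω) ∂P) := by
        rw [integral_add (hint1.const_mul _) (hint2.const_mul _),
          integral_const_mul, integral_const_mul]
    _ = (1/2 : ℝ) * ((θ - θtilde) ⬝ᵥ S.mulVec (θ - θtilde))
        + (1/2 : ℝ) * (S * Ktilde.toBlocks₂₂).trace
        + (pγ : ℝ) / 2 := by
        have Ksymm : ∀ a b, Ktilde a b = Ktilde b a := by
          intro a b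
          rw [← hβhatCov a b, ← hβhatCov b a]
          exact integral_congr_ae (Filter.Eventually.of_forall fun ω => mul_comm _ _)
        have hDij : ∀ i j, A⁻¹ i j = A⁻¹ j i := by
          intro i j
          conv_lhs => rw [← hDsymm]
          rfl
        have hxMean : ∀ i : Fin pθ, ∫ ω, (βhat ω (Sum.inr i) - θtilde i) ∂P = 0 := by
          intro i
          rw [integral_sub ((hβhatL2 _).integrable one_le_two) (integrable_const _),
            hβhatMean, integral_const]
          simp
        have hcov : ∀ i j, ∫ ω, u ω i * u ω j ∂P
            = Ktilde (Sum.inr i) (Sum.inr j) + (θ i - θtilde i) * (θ j - θtilde j) := by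
          intro i j
          have he : ∀ ω, u ω i * u ω j
              = (βhat ω (Sum.inr i) - θtilde i) * (βhat ω (Sum.inr j) - θtilde j)
              + ((θtilde j - θ j) * (βhat ω (Sum.inr i) - θtilde i)
              + ((θtilde i - θ i) * (βhat ω (Sum.inr j) - θtilde j)
              + (θtilde i - θ i) * (θtilde j - θ j))) := by
            intro ω; simp only [hu, Pi.sub_apply]; ring
          have hL2' : ∀ k : Fin pθ, MemLp (fun ω => βhat ω (Sum.inr k) - θtilde k) 2 P :=
            fun k => (hβhatL2 (Sum.inr k)).sub (memLp_const (θtilde k))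
          have h1 := memL2_mul_integrable' (hL2' i) (hL2' j)
          have h2 := ((hL2' i).integrable one_le_two).const_mul (θtilde j - θ j)
          have h3 := ((hL2' j).integrable one_le_two).const_mul (θtilde i - θ i)
          have hK := hβhatCov (Sum.inr i) (Sum.inr j)
          simp only [Sum.elim_inr] at hK
          have h4 : Integrable (fun ω => (θtilde i - θ i) * (βhat ω (Sum.inr j) - θtilde j)
              + (θtilde i - θ i) * (θtilde j - θ j)) P :=
            h3.add (integrable_const _)
          have h5 : Integrable (fun ω => (θtilde j - θ j) * (βhat ω (Sum.inr i) - θtilde i)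
              + ((θtilde i - θ i) * (βhat ω (Sum.inr j) - θtilde j)
              + (θtilde i - θ i) * (θtilde j - θ j))) P := h2.add h4
          rw [integral_congr_ae (Filter.Eventually.of_forall he),
            integral_add h1 h5, integral_add h2 h4, integral_add h3 (integrable_const _),
            integral_const_mul, integral_const_mul, hxMean, hxMean, integral_const, hK]
          simp only [measure_univ, probReal_univ, ENNReal.toReal_one, smul_eq_mul, one_mul,
            mul_zero, add_zero, zero_add]
          ring
        have hεint : ∫ ω, ε ω ⬝ᵥ A.mulVec (ε ω) ∂P = (pγ : ℝ) := by
          rw [integral_quadForm' A ε hεL2]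
          simp_rw [hεCov]
          have h6 : (∑ i : Fin pγ, ∑ j : Fin pγ, A i j * A⁻¹ i j)
              = ∑ i : Fin pγ, ∑ j : Fin pγ, A i j * A⁻¹ j i :=
            Finset.sum_congr rfl fun i _ => Finset.sum_congr rfl fun j _ => by rw [hDij]
          have h7 : (∑ i : Fin pγ, ∑ j : Fin pγ, A i j * A⁻¹ j i) = (A * A⁻¹).trace := by
            simp [Matrix.trace, Matrix.mul_apply, Matrix.diag]
          rw [h6, h7, hAD, Matrix.trace_one]
          simp
        have htr : (S * Ktilde.toBlocks₂₂).trace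
            = ∑ i, ∑ j, S i j * Ktilde (Sum.inr i) (Sum.inr j) := by
          simp only [Matrix.trace, Matrix.mul_apply, Matrix.diag, Matrix.toBlocks₂₂,
            Matrix.of_apply]
          exact Finset.sum_congr rfl fun i _ => Finset.sum_congr rfl fun j _ => by
            rw [Ksymm]
        rw [integral_quadForm' S u huL2, hεint]
        simp_rw [hcov]
        rw [htr, quad_sum' S (θ - θtilde)]
        simp only [Pi.sub_apply, mul_add, Finset.sum_add_distrib]
        ring
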